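/- For real c > 0 and ρ > 0, the function y(x) = α·e^{-ρ(1-x)}·Σ_{k=0}^{i} (-1)^k·C(i,k)·(1-x)^k/(c+k)·φ(c+k, c+k+1; ρ(1-x)) satisfies the ODE (1-x)·y'(x) - [ρ(1-x) + c]·y(x) + α·x^i = 0 on (0,1), where φ(a,b;z) = Σ_{n≥0} (a)_n/(b)_n · z^n/n! is the confluent hypergeometric function. -/

import Mathlib

open Real Finset

/-- Kummer's confluent hypergeometric series `φ(a,b;z) = Σ (a)_n/(b)_n · z^n/n!`. -/
noncomputable def phi (a b z : ℝ) : ℝ :=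
  ∑' n : ℕ, ((ascPochhammer ℝ n).eval a / (ascPochhammer ℝ n).eval b) * z ^ n / n.factorial

lemma sum1 (ρ c : ℝ) (hc : 0 < c) (k : ℕ) (u : ℝ) :
    Summable (fun n : ℕ => ρ ^ n * u ^ (n + k) / ((c + k + n) * n.factorial)) := by
  set R := |u| + 1 with hRdef
  have hR1 : (1 : ℝ) ≤ R := by linarith [abs_nonneg u]
  have huR : |u| ≤ R := by linarith [abs_nonneg u]
  refine Summable.of_norm_bounded (g := fun n => (R ^ k / c) * ((|ρ| * R) ^ n / n.factorial))
    ((Real.summable_pow_div_factorial _).mul_left _) (fun n => ?_)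
  have h2 : (0 : ℝ) < c + k + n := by positivity
  have h3 : (0 : ℝ) < (n.factorial : ℝ) := by positivity
  calc ‖ρ ^ n * u ^ (n + k) / ((c + ↑k + ↑n) * ↑n.factorial)‖
      = |ρ| ^ n * |u| ^ (n + k) / ((c + k + n) * n.factorial) := by
        rw [Real.norm_eq_abs, abs_div, abs_mul, abs_pow, abs_pow,
          abs_of_pos (mul_pos h2 h3)]
    _ ≤ |ρ| ^ n * R ^ (n + k) / (c * n.factorial) := by
        gcongr
        linarith
    _ = (R ^ k / c) * ((|ρ| * R) ^ n / n.factorial) := by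
        rw [pow_add, mul_pow]; ring

lemma sum2 (ρ c : ℝ) (hc : 0 < c) (k : ℕ) (u : ℝ) :
    Summable (fun n : ℕ =>
      ρ ^ n * (((n + k : ℕ) : ℝ) * u ^ (n + k - 1)) / ((c + k + n) * n.factorial)) := by
  set R := |u| + 1 with hRdef
  have hR1 : (1 : ℝ) ≤ R := by linarith [abs_nonneg u]
  have huR : |u| ≤ R := by linarith [abs_nonneg u]
  refine Summable.of_norm_bounded (g := fun n => (2 ^ k * R ^ k / c) * ((2 * |ρ| * R) ^ n / n.factorial))
    ((Real.summable_pow_div_factorial _).mul_left _) (fun n => ?_)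
  have h2 : (0 : ℝ) < c + k + n := by positivity
  have h3 : (0 : ℝ) < (n.factorial : ℝ) := by positivity
  have hyb : |u| ^ (n + k - 1) ≤ R ^ (n + k) :=
    le_trans (pow_le_pow_left₀ (abs_nonneg u) huR _)
      (pow_le_pow_right₀ hR1 (Nat.sub_le _ _))
  have hnk : ((n + k : ℕ) : ℝ) ≤ 2 ^ (n + k) := by
    calc ((n + k : ℕ) : ℝ) ≤ ((2 ^ (n + k) : ℕ) : ℝ) := by
          exact_mod_cast (Nat.lt_two_pow_self (n := n + k)).le
      _ = 2 ^ (n + k) := by push_cast; ring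
  calc ‖ρ ^ n * (((n + k : ℕ) : ℝ) * u ^ (n + k - 1)) / ((c + ↑k + ↑n) * ↑n.factorial)‖
      = |ρ| ^ n * (((n + k : ℕ) : ℝ) * |u| ^ (n + k - 1)) / ((c + k + n) * n.factorial) := by
        rw [Real.norm_eq_abs, abs_div, abs_mul, abs_mul, abs_pow, abs_pow,
          abs_of_pos (mul_pos h2 h3), Nat.abs_cast]
    _ ≤ |ρ| ^ n * ((2 : ℝ) ^ (n + k) * R ^ (n + k)) / (c * n.factorial) := by
        gcongr
        linarith
    _ = (2 ^ k * R ^ k / c) * ((2 * |ρ| * R) ^ n / n.factorial) := by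
        rw [pow_add, pow_add, mul_pow, mul_pow]; ring
lemma hasD (ρ c : ℝ) (hc : 0 < c) (k : ℕ) (u : ℝ) :
    HasDerivAt (fun v : ℝ => ∑' n : ℕ, ρ ^ n * v ^ (n + k) / ((c + k + n) * n.factorial))
      (∑' n : ℕ, ρ ^ n * (((n + k : ℕ) : ℝ) * u ^ (n + k - 1)) / ((c + k + n) * n.factorial))
      u := by
  set R := |u| + 1 with hRdef
  have hR1 : (1 : ℝ) ≤ R := by linarith [abs_nonneg u]
  have hu : u ∈ Metric.ball (0 : ℝ) R := by
    simp only [Metric.mem_ball, Real.dist_eq, sub_zero, hRdef]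
    linarith [abs_nonneg u]
  have hbound : ∀ (n : ℕ) (y : ℝ), y ∈ Metric.ball (0 : ℝ) R →
      ‖ρ ^ n * (((n + k : ℕ) : ℝ) * y ^ (n + k - 1)) / ((c + k + n) * n.factorial)‖
        ≤ (2 ^ k * R ^ k / c) * ((2 * |ρ| * R) ^ n / n.factorial) := by
    intro n y hy
    have hyR : |y| ≤ R := by
      simp only [Metric.mem_ball, Real.dist_eq, sub_zero] at hy; linarith
    have h2 : (0 : ℝ) < c + k + n := by positivity
    have h3 : (0 : ℝ) < (n.factorial : ℝ) := by positivity
    have hnk : ((n + k : ℕ) : ℝ) ≤ 2 ^ (n + k) := by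
      calc ((n + k : ℕ) : ℝ) ≤ ((2 ^ (n + k) : ℕ) : ℝ) := by
            exact_mod_cast (Nat.lt_two_pow_self (n := n + k)).le
        _ = 2 ^ (n + k) := by push_cast; ring
    have hyb : |y| ^ (n + k - 1) ≤ R ^ (n + k) :=
      le_trans (pow_le_pow_left₀ (abs_nonneg y) hyR _)
        (pow_le_pow_right₀ hR1 (Nat.sub_le _ _))
    calc ‖ρ ^ n * (((n + k : ℕ) : ℝ) * y ^ (n + k - 1)) / ((c + ↑k + ↑n) * ↑n.factorial)‖
        = |ρ| ^ n * (((n + k : ℕ) : ℝ) * |y| ^ (n + k - 1)) / ((c + k + n) * n.factorial) := by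
          rw [Real.norm_eq_abs, abs_div, abs_mul, abs_mul, abs_pow, abs_pow,
            abs_of_pos (mul_pos h2 h3), Nat.abs_cast]
      _ ≤ |ρ| ^ n * ((2 : ℝ) ^ (n + k) * R ^ (n + k)) / (c * n.factorial) := by
          gcongr
          linarith
      _ = (2 ^ k * R ^ k / c) * ((2 * |ρ| * R) ^ n / n.factorial) := by
          rw [pow_add, pow_add, mul_pow, mul_pow]; ring
  exact hasDerivAt_tsum_of_isPreconnected
    (g := fun (n : ℕ) (v : ℝ) => ρ ^ n * v ^ (n + k) / ((c + k + n) * n.factorial))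
    (g' := fun (n : ℕ) (y : ℝ) =>
      ρ ^ n * (((n + k : ℕ) : ℝ) * y ^ (n + k - 1)) / ((c + k + n) * n.factorial))
    ((Real.summable_pow_div_factorial _).mul_left _) Metric.isOpen_ball
    (convex_ball 0 R).isPreconnected
    (fun n y _ => ((hasDerivAt_pow (n + k) y).const_mul (ρ ^ n)).div_const _)
    hbound hu (sum1 ρ c hc k u) hu
lemma poch_ratio (a : ℝ) (ha : 0 < a) (n : ℕ) :
    (ascPochhammer ℝ n).eval a / (ascPochhammer ℝ n).eval (a + 1) = a / (a + n) := by
  have h1 : (ascPochhammer ℝ (n + 1)).eval a = (ascPochhammer ℝ n).eval a * (a + n) :=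
    ascPochhammer_succ_eval n a
  have h2 : (ascPochhammer ℝ (n + 1)).eval a = a * (ascPochhammer ℝ n).eval (a + 1) := by
    rw [ascPochhammer_succ_left]
    simp [Polynomial.eval_comp]
  have hp1 : 0 < (ascPochhammer ℝ n).eval (a + 1) := ascPochhammer_pos n _ (by linarith)
  have han : 0 < a + n := by positivity
  field_simp
  linarith [h1.symm.trans h2]

lemma rep (ρ c : ℝ) (hc : 0 < c) (k : ℕ) (u : ℝ) :
    u ^ k / (c + k) * phi (c + k) (c + k + 1) (ρ * u)
      = ∑' n : ℕ, ρ ^ n * u ^ (n + k) / ((c + k + n) * n.factorial) := by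
  unfold phi
  rw [← tsum_mul_left]
  refine tsum_congr fun n => ?_
  have ha : (0 : ℝ) < c + k := by positivity
  rw [poch_ratio _ ha n]
  have h1 : (0 : ℝ) < c + k + n := by positivity
  have h3 : (0 : ℝ) < (n.factorial : ℝ) := by positivity
  rw [mul_pow, pow_add]
  field_simp

lemma combine (ρ c : ℝ) (hc : 0 < c) (k : ℕ) (u : ℝ) :
    u * (∑' n : ℕ, ρ ^ n * (((n + k : ℕ) : ℝ) * u ^ (n + k - 1)) / ((c + k + n) * n.factorial))
      + c * (∑' n : ℕ, ρ ^ n * u ^ (n + k) / ((c + k + n) * n.factorial))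
      = u ^ k * Real.exp (ρ * u) := by
  rw [← tsum_mul_left, ← tsum_mul_left,
    ← Summable.tsum_add ((sum2 ρ c hc k u).mul_left u) ((sum1 ρ c hc k u).mul_left c)]
  have hexp : Real.exp (ρ * u) = ∑' n : ℕ, (ρ * u) ^ n / n.factorial := by
    rw [Real.exp_eq_exp_ℝ, NormedSpace.exp_eq_tsum_div]
  rw [hexp, ← tsum_mul_left]
  refine tsum_congr fun n => ?_
  have hF : ((n.factorial : ℝ)) ≠ 0 := by positivity
  rcases Nat.eq_zero_or_pos (n + k) with h | h
  · obtain ⟨hn, hk⟩ := Nat.add_eq_zero.mp h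
    subst hn; subst hk
    simp
    field_simp
  · obtain ⟨m, hm⟩ : ∃ m, n + k = m + 1 := ⟨n + k - 1, (Nat.succ_pred_eq_of_pos h).symm⟩
    have hku : u ^ k * u ^ n = u ^ (m + 1) := by
      rw [← pow_add, add_comm k n, hm]
    have hcast : (k : ℝ) + n = (m : ℝ) + 1 := by
      have := congrArg (Nat.cast : ℕ → ℝ) hm; push_cast at this; linarith
    have hR : u ^ k * ((ρ * u) ^ n / n.factorial) = ρ ^ n * (u ^ m * u) / n.factorial := by
      rw [mul_pow, ← pow_succ, ← hku]; ring
    rw [hm, Nat.add_sub_cancel, hR]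
    have hD' : c + (k : ℝ) + n = c + m + 1 := by linarith
    rw [hD', pow_succ]
    push_cast
    have hd2 : c + (m:ℝ) + 1 ≠ 0 := by positivity
    field_simp
    ring
/-- The explicit function (3.7) solves the ODE `(1-x)y' - (ρ(1-x)+c)y + αx^i = 0` on `(0,1)`. -/
theorem stmt_4 (ρ c α : ℝ) (hρ : ρ > 0) (hc : c > 0) (hα : α > 0) (i : ℕ) :
    ∀ x ∈ Set.Ioo (0 : ℝ) 1, ∃ d : ℝ,
      HasDerivAt (fun t : ℝ => α * exp (-ρ * (1 - t)) *
        ∑ k ∈ range (i + 1), (-1 : ℝ) ^ k * (i.choose k : ℝ) * (1 - t) ^ k / (c + k) *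
          phi (c + k) (c + k + 1) (ρ * (1 - t))) d x ∧
      (1 - x) * d - (ρ * (1 - x) + c) * (α * exp (-ρ * (1 - x)) *
        ∑ k ∈ range (i + 1), (-1 : ℝ) ^ k * (i.choose k : ℝ) * (1 - x) ^ k / (c + k) *
          phi (c + k) (c + k + 1) (ρ * (1 - x))) + α * x ^ i = 0 := by
  intro x hx
  -- rewrite the function in series form
  have hfun : (fun t : ℝ => α * exp (-ρ * (1 - t)) *
        ∑ k ∈ range (i + 1), (-1 : ℝ) ^ k * (i.choose k : ℝ) * (1 - t) ^ k / (c + k) *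
          phi (c + k) (c + k + 1) (ρ * (1 - t)))
      = (fun t : ℝ => α * exp (-ρ * (1 - t)) *
        ∑ k ∈ range (i + 1), (-1 : ℝ) ^ k * (i.choose k : ℝ) *
          ∑' n : ℕ, ρ ^ n * (1 - t) ^ (n + k) / ((c + k + n) * n.factorial)) := by
    funext t
    congr 1
    refine Finset.sum_congr rfl fun k _ => ?_
    rw [← rep ρ c hc k (1 - t)]
    ring
  have hinner : HasDerivAt (fun t : ℝ => 1 - t) (-1) x := by
    simpa using (hasDerivAt_id x).const_sub 1
  have hexp : HasDerivAt (fun t : ℝ => Real.exp (-ρ * (1 - t)))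
      (Real.exp (-ρ * (1 - x)) * (-ρ * -1)) x := (hinner.const_mul (-ρ)).exp
  have hFk : ∀ k : ℕ, HasDerivAt
      (fun t : ℝ => ∑' n : ℕ, ρ ^ n * (1 - t) ^ (n + k) / ((c + k + n) * n.factorial))
      ((∑' n : ℕ, ρ ^ n * (((n + k : ℕ) : ℝ) * (1 - x) ^ (n + k - 1)) /
        ((c + k + n) * n.factorial)) * (-1)) x := by
    intro k
    have := (hasD ρ c hc k (1 - x)).comp x hinner
    exact this
  have hsum : HasDerivAt
      (fun t : ℝ => ∑ k ∈ range (i + 1), (-1 : ℝ) ^ k * (i.choose k : ℝ) *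
        ∑' n : ℕ, ρ ^ n * (1 - t) ^ (n + k) / ((c + k + n) * n.factorial))
      (∑ k ∈ range (i + 1), (-1 : ℝ) ^ k * (i.choose k : ℝ) *
        ((∑' n : ℕ, ρ ^ n * (((n + k : ℕ) : ℝ) * (1 - x) ^ (n + k - 1)) /
          ((c + k + n) * n.factorial)) * (-1))) x :=
    HasDerivAt.fun_sum fun k _ => (hFk k).const_mul _
  have hy : HasDerivAt (fun t : ℝ => α * exp (-ρ * (1 - t)) *
        ∑ k ∈ range (i + 1), (-1 : ℝ) ^ k * (i.choose k : ℝ) *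
          ∑' n : ℕ, ρ ^ n * (1 - t) ^ (n + k) / ((c + k + n) * n.factorial)) _ x :=
    (hexp.const_mul α).mul hsum
  refine ⟨_, hfun ▸ hy, ?_⟩
  · -- value identity
    have hsumval : (∑ k ∈ range (i + 1), (-1 : ℝ) ^ k * (i.choose k : ℝ) * (1 - x) ^ k / (c + k) *
          phi (c + k) (c + k + 1) (ρ * (1 - x)))
        = ∑ k ∈ range (i + 1), (-1 : ℝ) ^ k * (i.choose k : ℝ) *
          ∑' n : ℕ, ρ ^ n * (1 - x) ^ (n + k) / ((c + k + n) * n.factorial) :=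
      Finset.sum_congr rfl fun k _ => by rw [← rep ρ c hc k (1 - x)]; ring
    rw [hsumval]
    have e1 : (∑ k ∈ range (i + 1), (-1 : ℝ) ^ k * (i.choose k : ℝ) *
          ((∑' n : ℕ, ρ ^ n * (((n + k : ℕ) : ℝ) * (1 - x) ^ (n + k - 1)) /
            ((c + k + n) * n.factorial)) * (-1)))
        = -∑ k ∈ range (i + 1), (-1 : ℝ) ^ k * (i.choose k : ℝ) *
          (∑' n : ℕ, ρ ^ n * (((n + k : ℕ) : ℝ) * (1 - x) ^ (n + k - 1)) /
            ((c + k + n) * n.factorial)) := by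
      rw [← Finset.sum_neg_distrib]
      exact Finset.sum_congr rfl fun k _ => by ring
    have hbin : ∑ k ∈ range (i + 1), (-1 : ℝ) ^ k * (i.choose k : ℝ) * (1 - x) ^ k = x ^ i := by
      have h := add_pow (-(1 - x)) (1 : ℝ) i
      simp only [one_pow, mul_one] at h
      rw [show -(1 - x) + 1 = x by ring] at h
      calc ∑ k ∈ range (i + 1), (-1 : ℝ) ^ k * (i.choose k : ℝ) * (1 - x) ^ k
          = ∑ k ∈ range (i + 1), (-(1 - x)) ^ k * (i.choose k : ℝ) :=
            Finset.sum_congr rfl fun k _ => by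
              rw [show (-(1 - x) : ℝ) ^ k = (-1 : ℝ) ^ k * (1 - x) ^ k by
                rw [← neg_one_mul, mul_pow]]
              ring
        _ = x ^ i := h.symm
    have e2 : (1 - x) * (∑ k ∈ range (i + 1), (-1 : ℝ) ^ k * (i.choose k : ℝ) *
          (∑' n : ℕ, ρ ^ n * (((n + k : ℕ) : ℝ) * (1 - x) ^ (n + k - 1)) /
            ((c + k + n) * n.factorial)))
        + c * (∑ k ∈ range (i + 1), (-1 : ℝ) ^ k * (i.choose k : ℝ) *
          ∑' n : ℕ, ρ ^ n * (1 - x) ^ (n + k) / ((c + k + n) * n.factorial))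
        = Real.exp (ρ * (1 - x)) * x ^ i := by
      rw [Finset.mul_sum, Finset.mul_sum, ← Finset.sum_add_distrib]
      have step : ∀ k ∈ range (i + 1),
          (1 - x) * ((-1 : ℝ) ^ k * (i.choose k : ℝ) *
            (∑' n : ℕ, ρ ^ n * (((n + k : ℕ) : ℝ) * (1 - x) ^ (n + k - 1)) /
              ((c + k + n) * n.factorial)))
          + c * ((-1 : ℝ) ^ k * (i.choose k : ℝ) *
            ∑' n : ℕ, ρ ^ n * (1 - x) ^ (n + k) / ((c + k + n) * n.factorial))
          = (-1 : ℝ) ^ k * (i.choose k : ℝ) * ((1 - x) ^ k * Real.exp (ρ * (1 - x))) := by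
        intro k _
        have := combine ρ c hc k (1 - x)
        linear_combination ((-1 : ℝ) ^ k * (i.choose k : ℝ)) * this
      rw [Finset.sum_congr rfl step]
      calc ∑ k ∈ range (i + 1), (-1 : ℝ) ^ k * (i.choose k : ℝ) *
            ((1 - x) ^ k * Real.exp (ρ * (1 - x)))
          = (∑ k ∈ range (i + 1), (-1 : ℝ) ^ k * (i.choose k : ℝ) * (1 - x) ^ k) *
            Real.exp (ρ * (1 - x)) := by rw [Finset.sum_mul]; exact Finset.sum_congr rfl fun k _ => by ring
        _ = Real.exp (ρ * (1 - x)) * x ^ i := by rw [hbin]; ring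
    have eE : Real.exp (-ρ * (1 - x)) * Real.exp (ρ * (1 - x)) = 1 := by
      rw [← Real.exp_add, show -ρ * (1 - x) + ρ * (1 - x) = 0 by ring, Real.exp_zero]
    rw [e1]
    linear_combination (-(α * Real.exp (-ρ * (1 - x)))) * e2 - (α * x ^ i) * eE
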